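/- The product space 2^𝔭 = Bool^I, where I is an index set of cardinality 𝔭 and the space carries the product topology, is not countable dense homogeneous. -/

import Mathlib

/-- A topological space is countable dense homogeneous (CDH) if for any two countable
dense subsets `D`, `D'` there is a self-homeomorphism taking `D` onto `D'`. -/
def IsCDH (X : Type*) [TopologicalSpace X] : Prop :=
  ∀ D D' : Set X, D.Countable → Dense D → D'.Countable → Dense D' →
    ∃ h : X ≃ₜ X, h '' D = D'

/-- The pseudo-intersection number `𝔭`: the minimal cardinality of a centered family of
infinite subsets of `ℕ` with no infinite pseudo-intersection. -/
noncomputable def pseudoIntersectionNumber : Cardinal :=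
  sInf {c : Cardinal |
    ∃ F : Set (Set ℕ), Cardinal.mk F = c ∧
      (∀ A ∈ F, A.Infinite) ∧
      (∀ G : Finset (Set ℕ), ↑G ⊆ F → G.Nonempty → (⋂ A ∈ G, A).Infinite) ∧
      ¬ ∃ A : Set ℕ, A.Infinite ∧ ∀ B ∈ F, (A \ B).Finite}

open Filter Set Topology
open scoped symmDiff

namespace NotCDHAux

abbrev Npt : Type := ℕ × Finset ℕ × Finset (Finset ℕ)

noncomputable def trace (A : Set ℕ) (s : Finset ℕ) : Finset ℕ :=
  @Finset.filter ℕ (fun m => m ∈ A) (Classical.decPred _) s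

lemma mem_trace {A : Set ℕ} {s : Finset ℕ} {n : ℕ} :
    n ∈ trace A s ↔ n ∈ s ∧ n ∈ A := by
  simp [trace, Finset.mem_filter]

def Rset (A : Set ℕ) : Set Npt := {x | x.1 ∈ A ∧ trace A x.2.1 ∈ x.2.2}

lemma indep (Fs : Set (Set ℕ))
    (hcent : ∀ G : Finset (Set ℕ), ↑G ⊆ Fs → (⋂ A ∈ G, A).Infinite)
    (t : Finset (Set ℕ)) (ht : ↑t ⊆ Fs) (f : Set ℕ → Bool) :
    ∃ x : Npt, ∀ A ∈ t, (x ∈ Rset A ↔ f A = true) := by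
  classical
  set s : Finset ℕ :=
    (t ×ˢ t).biUnion (fun p => if h : (p.1 ∆ p.2).Nonempty then {h.choose} else ∅) with hs
  have hsep : ∀ A ∈ t, ∀ B ∈ t, A ≠ B → trace A s ≠ trace B s := by
    intro A hA B hB hAB
    have hne : (A ∆ B).Nonempty := Set.symmDiff_nonempty.mpr hAB
    have hn : hne.choose ∈ A ∆ B := hne.choose_spec
    have hns : hne.choose ∈ s := by
      rw [hs]
      apply Finset.mem_biUnion.mpr
      refine ⟨(A, B), Finset.mem_product.mpr ⟨hA, hB⟩, ?_⟩
      rw [dif_pos hne]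
      exact Finset.mem_singleton_self _
    rw [Set.mem_symmDiff] at hn
    rcases hn with ⟨hnA, hnB⟩ | ⟨hnB, hnA⟩
    · intro he
      have h1 : hne.choose ∈ trace A s := mem_trace.mpr ⟨hns, hnA⟩
      rw [he] at h1
      exact hnB (mem_trace.mp h1).2
    · intro he
      have h1 : hne.choose ∈ trace B s := mem_trace.mpr ⟨hns, hnB⟩
      rw [← he] at h1
      exact hnA (mem_trace.mp h1).2
  obtain ⟨v, hv⟩ := (hcent t ht).nonempty
  refine ⟨(v, s, (t.filter (fun A => f A = true)).image (fun A => trace A s)), ?_⟩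
  intro A hA
  have hvA : v ∈ A := Set.mem_iInter₂.mp hv A hA
  constructor
  · rintro ⟨-, htr⟩
    obtain ⟨B, hB, hBe⟩ := Finset.mem_image.mp htr
    obtain ⟨hBt, hfB⟩ := Finset.mem_filter.mp hB
    by_cases hABeq : B = A
    · rw [← hABeq]; exact hfB
    · exact absurd hBe (hsep B hBt A hA hABeq)
  · intro hfA
    exact ⟨hvA, Finset.mem_image.mpr ⟨A, Finset.mem_filter.mpr ⟨hA, hfA⟩, rfl⟩⟩

lemma no_psi (F : Set (Set ℕ))
    (hnops : ¬∃ A : Set ℕ, A.Infinite ∧ ∀ B ∈ F, (A \ B).Finite)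
    (x : ℕ → Npt)
    (hxF : ∀ A ∈ F, ∀ᶠ k in atTop, x k ∈ Rset A)
    (hxco : ∀ i : ℕ, ∀ᶠ k in atTop, x k ∈ Rset ({i}ᶜ)) : False := by
  classical
  by_cases hV : (Set.range (fun k => (x k).1)).Infinite
  · apply hnops
    refine ⟨Set.range (fun k => (x k).1), hV, ?_⟩
    intro B hB
    obtain ⟨K, hK⟩ := eventually_atTop.mp (hxF B hB)
    apply Set.Finite.subset ((Set.finite_Iio K).image (fun k => (x k).1))
    rintro v ⟨⟨k, rfl⟩, hvB⟩
    refine ⟨k, ?_, rfl⟩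
    simp only [Set.mem_Iio]
    by_contra hk
    exact hvB (hK k (le_of_not_gt hk)).1
  · rw [Set.not_infinite] at hV
    have hfib : ∃ v, {k | (x k).1 = v}.Infinite := by
      by_contra hcon
      push_neg at hcon
      have hsub : (Set.univ : Set ℕ) ⊆ ⋃ v ∈ Set.range (fun k => (x k).1), {k | (x k).1 = v} := by
        intro k _
        exact Set.mem_biUnion ⟨k, rfl⟩ rfl
      have : (Set.univ : Set ℕ).Finite :=
        Set.Finite.subset (hV.biUnion (fun v _ => hcon v)) hsub
      exact Set.infinite_univ this
    obtain ⟨v₀, hv₀⟩ := hfib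
    obtain ⟨K, hK⟩ := eventually_atTop.mp (hxco v₀)
    apply hv₀
    apply Set.Finite.subset (Set.finite_Iio K)
    intro k hk
    simp only [Set.mem_Iio]
    by_contra h
    exact (hK k (le_of_not_gt h)).1 hk

def pSet : Set Cardinal :=
  {c : Cardinal |
    ∃ F : Set (Set ℕ), Cardinal.mk F = c ∧
      (∀ A ∈ F, A.Infinite) ∧
      (∀ G : Finset (Set ℕ), ↑G ⊆ F → G.Nonempty → (⋂ A ∈ G, A).Infinite) ∧
      ¬ ∃ A : Set ℕ, A.Infinite ∧ ∀ B ∈ F, (A \ B).Finite}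

lemma pSet_nonempty : pSet.Nonempty := by
  classical
  set F₀ : Set (Set ℕ) := {A : Set ℕ | A ∈ Filter.hyperfilter ℕ} with hF₀
  refine ⟨Cardinal.mk F₀, F₀, rfl, ?_, ?_, ?_⟩
  · intro A hA
    by_contra hfin
    rw [Set.not_infinite] at hfin
    exact Filter.notMem_hyperfilter_of_finite hfin hA
  · intro G hG _
    have hmem : (⋂ A ∈ G, A) ∈ Filter.hyperfilter ℕ :=
      (Filter.biInter_finset_mem G).mpr (fun A hA => hG hA)
    by_contra hfin
    rw [Set.not_infinite] at hfin
    exact Filter.notMem_hyperfilter_of_finite hfin hmem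
  · rintro ⟨A, hAinf, hdiff⟩
    have : Infinite ↥A := Set.infinite_coe_iff.mpr hAinf
    let f : ℕ ↪ ↥A := Infinite.natEmbedding ↥A
    have hfi : Function.Injective (fun n => ((f n : ↥A) : ℕ)) :=
      Subtype.val_injective.comp f.injective
    set g : ℕ → ℕ := fun n => ((f (2 * n) : ↥A) : ℕ) with hg
    set g' : ℕ → ℕ := fun n => ((f (2 * n + 1) : ↥A) : ℕ) with hg'
    have hginj : Function.Injective g := by
      intro a b hab
      have := hfi hab
      omega
    set B : Set ℕ := Set.range g with hB
    have hBA : B ⊆ A := by rintro _ ⟨n, rfl⟩; exact (f (2 * n)).2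
    have hBinf : B.Infinite := Set.infinite_range_of_injective hginj
    have hAdB : (A \ B).Infinite := by
      have hginj' : Function.Injective g' := by
        intro a b hab
        have := hfi hab
        omega
      apply (Set.infinite_range_of_injective hginj').mono
      rintro _ ⟨n, rfl⟩
      refine ⟨(f (2 * n + 1)).2, ?_⟩
      rintro ⟨m, hm⟩
      have := hfi hm
      omega
    rcases Ultrafilter.mem_or_compl_mem (Filter.hyperfilter ℕ) B with hBm | hBm
    · exact hAdB (hdiff B hBm)
    · have hfin : (A \ Bᶜ).Finite := hdiff Bᶜ hBm
      apply hBinf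
      apply hfin.subset
      intro b hb
      exact ⟨hBA hb, fun hc => hc hb⟩

end NotCDHAux

/-- The product of `𝔭` many copies of the two-point discrete space is not CDH. -/
theorem not_CDH_two_pow_p
    (I : Type) (hI : Cardinal.mk I = pseudoIntersectionNumber) :
    ¬ IsCDH (I → Bool) := by
  classical
  intro hCDH
  have hpeq : pseudoIntersectionNumber = sInf NotCDHAux.pSet := rfl
  have hmem : pseudoIntersectionNumber ∈ NotCDHAux.pSet := by
    rw [hpeq]; exact csInf_mem NotCDHAux.pSet_nonempty
  obtain ⟨F, hmkF, hFinf, hFcent, hFnops⟩ := hmem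
  -- F is infinite
  have hFInfinite : Infinite ↥F := by
    rw [Set.infinite_coe_iff]
    intro hfin
    rcases Set.eq_empty_or_nonempty F with hemp | hne
    · apply hFnops
      refine ⟨Set.univ, Set.infinite_univ, ?_⟩
      intro B hB
      rw [hemp] at hB
      exact absurd hB (Set.notMem_empty B)
    · have hGne : hfin.toFinset.Nonempty := by
        rwa [Set.Finite.toFinset_nonempty]
      have hY := hFcent hfin.toFinset (by simp) hGne
      apply hFnops
      refine ⟨⋂ A ∈ hfin.toFinset, A, hY, ?_⟩
      intro B hB
      have hsub : (⋂ A ∈ hfin.toFinset, A) ⊆ B := by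
        intro n hn
        exact Set.mem_iInter₂.mp hn B (hfin.mem_toFinset.mpr hB)
      rw [Set.diff_eq_empty.mpr hsub]
      exact Set.finite_empty
  haveI hIInf : Infinite I := by
    rw [Cardinal.infinite_iff, hI, ← hmkF]
    exact Cardinal.infinite_iff.mp hFInfinite
  -- the enlarged family
  set Fs : Set (Set ℕ) := F ∪ Set.range (fun i : ℕ => ({i}ᶜ : Set ℕ)) with hFsdef
  have hcoFs : ∀ i : ℕ, ({i}ᶜ : Set ℕ) ∈ Fs := fun i => Or.inr ⟨i, rfl⟩
  have hFsubFs : F ⊆ Fs := Set.subset_union_left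
  have hcentStar : ∀ G : Finset (Set ℕ), ↑G ⊆ Fs → (⋂ A ∈ G, A).Infinite := by
    intro G hG
    set G₁ : Finset (Set ℕ) := G.filter (fun A => A ∈ F) with hG₁
    have hCinf : (⋂ A ∈ G₁, A).Infinite := by
      rcases G₁.eq_empty_or_nonempty with h | h
      · rw [h]
        simpa using Set.infinite_univ
      · exact hFcent G₁ (fun A hA => (Finset.mem_filter.mp hA).2) h
    have hbad : (⋃ A ∈ G.filter (fun A => A ∉ F), Aᶜ).Finite := by
      apply Set.Finite.biUnion (G.filter (fun A => A ∉ F)).finite_toSet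
      intro A hA
      obtain ⟨hAG, hAnF⟩ := Finset.mem_filter.mp hA
      rcases hG hAG with hin | ⟨i, hieq⟩
      · exact absurd hin hAnF
      · rw [← hieq]
        simp
    apply (hCinf.diff hbad).mono
    intro n hn
    apply Set.mem_iInter₂.mpr
    intro A hA
    by_cases hAF : A ∈ F
    · exact Set.mem_iInter₂.mp hn.1 A (Finset.mem_filter.mpr ⟨hA, hAF⟩)
    · by_contra hnA
      exact hn.2 (Set.mem_biUnion (Finset.mem_filter.mpr ⟨hA, hAF⟩) hnA)
  -- cardinality of Fs
  have hmkFs : Cardinal.mk ↥Fs = Cardinal.mk I := by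
    apply le_antisymm
    · have h1 : Cardinal.mk ↥Fs ≤ Cardinal.mk ↥F + Cardinal.mk ↥(Set.range (fun i : ℕ => ({i}ᶜ : Set ℕ))) :=
        Cardinal.mk_union_le _ _
      have h2 : Cardinal.mk ↥(Set.range (fun i : ℕ => ({i}ᶜ : Set ℕ))) ≤ Cardinal.aleph0 := by
        have := Cardinal.mk_range_le (f := fun i : ℕ => ({i}ᶜ : Set ℕ))
        simpa using this
      have h3 : Cardinal.mk ↥Fs ≤ Cardinal.mk ↥F + Cardinal.aleph0 :=
        h1.trans (add_le_add le_rfl h2)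
      have h4 : Cardinal.mk ↥F + Cardinal.aleph0 = Cardinal.mk ↥F :=
        Cardinal.add_eq_left (Cardinal.infinite_iff.mp hFInfinite)
          (Cardinal.infinite_iff.mp hFInfinite)
      rw [h4] at h3
      rw [hI, ← hmkF]
      exact h3
    · rw [hI, ← hmkF]
      exact Cardinal.mk_le_mk_of_subset hFsubFs
  obtain ⟨β⟩ : Nonempty (I ≃ ↥Fs) := Cardinal.eq.mp hmkFs.symm
  set ι : ℕ ↪ I := Infinite.natEmbedding I with hι
  -- the countable dense "rigid" set
  set eFun : NotCDHAux.Npt → (I → Bool) :=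
    fun x α => decide (x ∈ NotCDHAux.Rset ((β α : ↥Fs) : Set ℕ)) with heFun
  have hE_dense : Dense (Set.range eFun) := by
    rw [dense_iff_inter_open]
    intro U hU hUne
    obtain ⟨f, hf⟩ := hUne
    obtain ⟨t, u, h1, h2⟩ := isOpen_pi_iff.mp hU f hf
    set fb : Set ℕ → Bool := fun A => if h : A ∈ Fs then f (β.symm ⟨A, h⟩) else true with hfb
    have htsub : ↑(t.image (fun α => ((β α : ↥Fs) : Set ℕ))) ⊆ Fs := by
      intro A hA
      obtain ⟨α, hα, hαeq⟩ := Finset.mem_image.mp hA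
      rw [← hαeq]
      exact (β α).2
    obtain ⟨x, hx⟩ := NotCDHAux.indep Fs hcentStar
      (t.image (fun α => ((β α : ↥Fs) : Set ℕ))) htsub fb
    have hval : ∀ α ∈ t, eFun x α = f α := by
      intro α hα
      have hAmem : ((β α : ↥Fs) : Set ℕ) ∈ t.image (fun α => ((β α : ↥Fs) : Set ℕ)) :=
        Finset.mem_image_of_mem _ hα
      have hiff := hx _ hAmem
      have hfbeq : fb ((β α : ↥Fs) : Set ℕ) = f α := by
        rw [hfb]
        simp only
        rw [dif_pos (β α).2]
        congr 1
        have hsub : (⟨((β α : ↥Fs) : Set ℕ), (β α).2⟩ : ↥Fs) = β α := Subtype.coe_eta _ _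
        rw [hsub, Equiv.symm_apply_apply]
      cases hfa : f α with
      | true =>
        apply decide_eq_true
        exact hiff.mpr (hfbeq.trans hfa)
      | false =>
        apply decide_eq_false
        intro hP
        have := hiff.mp hP
        rw [hfbeq, hfa] at this
        exact Bool.false_ne_true this
    refine ⟨eFun x, h2 ?_, ⟨x, rfl⟩⟩
    intro α hα
    have hαt : α ∈ t := hα
    rw [hval α hαt]
    exact (h1 α hαt).2
  -- the two countable dense sets
  set xstar : I → Bool := fun _ => true with hxstar
  set D₁ : Set (I → Bool) := insert xstar (Set.range eFun) with hD₁
  set fl : Finset ℕ → (I → Bool) → (I → Bool) :=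
    fun u e α => xor (e α) (decide (∃ k ∈ u, ι k = α)) with hfl
  set D₂ : Set (I → Bool) := Set.range (fun q : NotCDHAux.Npt × Finset ℕ => fl q.2 (eFun q.1)) with hD₂
  have hD₁c : D₁.Countable := (Set.countable_range eFun).insert _
  have hD₂c : D₂.Countable := Set.countable_range _
  have hED₂ : Set.range eFun ⊆ D₂ := by
    rintro _ ⟨x, rfl⟩
    refine ⟨(x, ∅), ?_⟩
    funext α
    simp [hfl]
  have hD₁d : Dense D₁ := hE_dense.mono (Set.subset_insert _ _)
  have hD₂d : Dense D₂ := hE_dense.mono hED₂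
  obtain ⟨h, hh⟩ := hCDH D₁ D₂ hD₁c hD₁d hD₂c hD₂d
  have hyD₂ : h xstar ∈ D₂ := hh ▸ Set.mem_image_of_mem h (Set.mem_insert _ _)
  obtain ⟨⟨x₀, u⟩, hq⟩ := hyD₂
  set y : I → Bool := h xstar with hy
  set yseq : ℕ → (I → Bool) := fun k => fl (u ∆ {k}) (eFun x₀) with hyseq
  have hyseqD₂ : ∀ k, yseq k ∈ D₂ := fun k => ⟨(x₀, u ∆ {k}), rfl⟩
  -- yseq k agrees with y away from coordinate ι k
  have hstab : ∀ k α, ι k ≠ α → yseq k α = y α := by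
    intro k α hkα
    rw [← hq]
    simp only [hyseq, hfl]
    congr 1
    rw [decide_eq_decide]
    constructor
    · rintro ⟨j, hj, hjeq⟩
      have hjk : j ≠ k := fun hc => hkα (hc ▸ hjeq)
      rcases Finset.mem_symmDiff.mp hj with ⟨hju, _⟩ | ⟨hjs, _⟩
      · exact ⟨j, hju, hjeq⟩
      · exact absurd (Finset.mem_singleton.mp hjs) hjk
    · rintro ⟨j, hj, hjeq⟩
      have hjk : j ≠ k := fun hc => hkα (hc ▸ hjeq)
      exact ⟨j, Finset.mem_symmDiff.mpr (Or.inl ⟨hj, fun hc => hjk (Finset.mem_singleton.mp hc)⟩), hjeq⟩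
  have hneq : ∀ k, yseq k ≠ y := by
    intro k hk
    have h1 := congrFun hk (ι k)
    rw [← hq] at h1
    simp only [hyseq, hfl] at h1
    have hdec1 : (∃ j ∈ u ∆ {k}, ι j = ι k) ↔ k ∉ u := by
      constructor
      · rintro ⟨j, hj, hjeq⟩
        have hjk : j = k := ι.injective hjeq
        subst hjk
        rcases Finset.mem_symmDiff.mp hj with ⟨_, hns⟩ | ⟨_, hnu⟩
        · exact absurd (Finset.mem_singleton_self _) hns
        · exact hnu
      · intro hk'
        exact ⟨k, Finset.mem_symmDiff.mpr (Or.inr ⟨Finset.mem_singleton_self _, hk'⟩), rfl⟩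
    have hdec2 : (∃ j ∈ u, ι j = ι k) ↔ k ∈ u := by
      constructor
      · rintro ⟨j, hj, hjeq⟩
        rwa [← ι.injective hjeq]
      · intro hk'
        exact ⟨k, hk', rfl⟩
    by_cases hku : k ∈ u
    · rw [decide_eq_false (fun hc => (hdec1.mp hc) hku), decide_eq_true (hdec2.mpr hku)] at h1
      cases eFun x₀ (ι k) <;> simp at h1
    · rw [decide_eq_true (hdec1.mpr hku), decide_eq_false (fun hc => hku (hdec2.mp hc))] at h1
      cases eFun x₀ (ι k) <;> simp at h1
  have htend : Tendsto yseq atTop (𝓝 y) := by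
    rw [tendsto_pi_nhds]
    intro α
    rw [nhds_discrete, tendsto_pure, eventually_atTop]
    by_cases hex : ∃ k₀, ι k₀ = α
    · obtain ⟨k₀, hk₀⟩ := hex
      refine ⟨k₀ + 1, fun k hk => ?_⟩
      apply hstab
      intro hc
      have : k = k₀ := ι.injective (hc.trans hk₀.symm)
      omega
    · exact ⟨0, fun k _ => hstab k α (fun hc => hex ⟨k, hc⟩)⟩
  set w : ℕ → (I → Bool) := fun k => h.symm (yseq k) with hw
  have hwE : ∀ k, w k ∈ Set.range eFun := by
    intro k
    have hmem : yseq k ∈ D₂ := hyseqD₂ k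
    rw [← hh] at hmem
    obtain ⟨d, hd, hdeq⟩ := hmem
    have hwd : w k = d := by
      rw [hw]
      simp only
      rw [← hdeq, Homeomorph.symm_apply_apply]
    rcases Set.mem_insert_iff.mp hd with hd1 | hd2
    · exfalso
      apply hneq k
      rw [← hdeq, hd1]
    · rw [hwd]
      exact hd2
  choose xs hxs using hwE
  have hwt : Tendsto w atTop (𝓝 xstar) := by
    have hcomp := (h.symm.continuous.tendsto y).comp htend
    have hsy : h.symm y = xstar := by
      rw [hy, Homeomorph.symm_apply_apply]
    rwa [hsy] at hcomp
  have hcoord : ∀ A, ∀ hA : A ∈ Fs, ∀ᶠ k in atTop, xs k ∈ NotCDHAux.Rset A := by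
    intro A hA
    have h1 := (tendsto_pi_nhds.mp hwt) (β.symm ⟨A, hA⟩)
    rw [nhds_discrete, tendsto_pure] at h1
    filter_upwards [h1] with k hk
    rw [← hxs k] at hk
    simp only [heFun] at hk
    rw [Equiv.apply_symm_apply] at hk
    exact of_decide_eq_true hk
  exact NotCDHAux.no_psi F hFnops xs (fun A hA => hcoord A (hFsubFs hA)) (fun i => hcoord _ (hcoFs i))
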